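/- arXiv:2309.00467 — 2 statements merged into one kernel-verified Lean document; each statement's English description precedes it below -/
import Mathlib

section
/- Let u,v,w ∈ S_n and let 1≤i<n with ℓ(s_i u)<ℓ(u). Then c_{s_i u, v}^w = −((1+βy_i)/(y_i−y_{i+1}))·c_{u,v}^w + ((1+βy_{i+1})/(y_i−y_{i+1}))·c_{u,v}^w|_{y_i↔y_{i+1}}. -/
open MvPolynomial

noncomputable section

namespace BPDPuzzle

/-- `x ⊖ y = (x - y)/(1 + β·y)`. -/
def ominus {K : Type*} [Field K] (β a b : K) : K := (a - b) / (1 + β * b)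

/-- A permutation of `ℕ` lying in `S_∞`, i.e. fixing all sufficiently large integers. -/
def FinPerm (w : Equiv.Perm ℕ) : Prop := ∃ N : ℕ, ∀ j, N ≤ j → w j = j

/-- A permutation of `ℕ` lying in `S_n` (0-based positions `0, …, n-1`). -/
def InSn (n : ℕ) (w : Equiv.Perm ℕ) : Prop := ∀ j, n ≤ j → w j = j

/-- Coxeter length: the number of inversions. -/
def len (w : Equiv.Perm ℕ) : ℕ := Set.ncard {p : ℕ × ℕ | p.1 < p.2 ∧ w p.2 < w p.1}

/-- The simple transposition `s_i`, exchanging the (0-based) positions `i` and `i+1`. -/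
def sTr (i : ℕ) : Equiv.Perm ℕ := Equiv.swap i (i + 1)

/-- `u` and `v` have separated descents at position `k`, i.e.
`maxdes(u) ≤ k ≤ mindes(v)` (in 0-based conventions: `u` has no descent at any
0-based position `≥ k` and `v` has no descent at any 0-based position `< k-1`). -/
def SepDesc (k : ℕ) (u v : Equiv.Perm ℕ) : Prop :=
  (∀ i, k ≤ i → u i ≤ u (i + 1)) ∧ (∀ i, i + 1 < k → v i ≤ v (i + 1))

/-- The longest element `n ⋯ 2 1` of `S_n`, extended by the identity. -/
def revPerm (n : ℕ) : Equiv.Perm ℕ where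
  toFun j := if j < n then n - 1 - j else j
  invFun j := if j < n then n - 1 - j else j
  left_inv j := by dsimp only; split_ifs <;> omega
  right_inv j := by dsimp only; split_ifs <;> omega

/-- Exchange the values of a valuation at the indices `i` and `i+1`. -/
def swapVal {K : Type*} (t : ℕ → K) (i : ℕ) : ℕ → K :=
  fun j => if j = i then t (i + 1) else if j = i + 1 then t i else t j

/-- The defining properties of the family of double Grothendieck polynomials
`𝔊_w(x, t)`, viewed as a family of polynomials in the `x`-variables depending on
a valuation `t` of the second set of variables:  the initial condition
`𝔊_{n⋯21}(x,t) = ∏_{i+j≤n} (x_i ⊖ t_j)` together with the Demazure recursion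
`π_i 𝔊_w = 𝔊_{w s_i}` whenever `w(i) > w(i+1)` (the latter written with the
denominator `x_i - x_{i+1}` cleared). -/
def GrothFamily {K : Type*} [Field K] (β : K)
    (G : (ℕ → K) → Equiv.Perm ℕ → MvPolynomial ℕ K) : Prop :=
  ∀ t : ℕ → K, (∀ j, 1 + β * t j ≠ 0) →
    (∀ n : ℕ, G t (revPerm n) =
      ∏ i ∈ Finset.range n, ∏ j ∈ Finset.range (n - 1 - i),
        C ((1 + β * t j)⁻¹) * (X i - C (t j))) ∧
    (∀ (w : Equiv.Perm ℕ) (i : ℕ), w (i + 1) < w i →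
      (X i - X (i + 1)) * G t (w * sTr i) =
        (1 + C β * X (i + 1)) * G t w
          - (1 + C β * X i) * rename ⇑(Equiv.swap i (i + 1)) (G t w))

/-- The defining property of the structure constants `c_{u,v}^w(t,y)`:
`𝔊_u(x,y) · 𝔊_v(x,t) = Σ_w c_{u,v}^w(t,y) · 𝔊_w(x,t)`, the (finitely supported)
sum ranging over the permutations `w ∈ S_∞`. -/
def StructConsts {K : Type*} [Field K] (β : K)
    (G : (ℕ → K) → Equiv.Perm ℕ → MvPolynomial ℕ K)
    (c : (ℕ → K) → (ℕ → K) → Equiv.Perm ℕ → Equiv.Perm ℕ → Equiv.Perm ℕ → K) : Prop :=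
  ∀ t y : ℕ → K, (∀ j, 1 + β * t j ≠ 0) → (∀ j, 1 + β * y j ≠ 0) →
    ∀ u v : Equiv.Perm ℕ, FinPerm u → FinPerm v →
      {w : Equiv.Perm ℕ | c t y u v w ≠ 0}.Finite ∧
      (∀ w, ¬ FinPerm w → c t y u v w = 0) ∧
      G y u * G t v = ∑ᶠ w : Equiv.Perm ℕ, C (c t y u v w) * G t w

/-! ### The lattice model / pipe puzzles -/

/-- A state of the `n × n` lattice model: labels in `{0, …, n}` on all horizontal
and vertical (half-)edges.  `sst.1 i j` is the `j`-th horizontal (half-)edge of row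
`i` (`j = 0` being the left boundary and `j = n` the right boundary), and
`sst.2 i j` is the `i`-th vertical (half-)edge of column `j` (`i = 0` the top
boundary, `i = n` the bottom boundary). -/
abbrev GridState (n : ℕ) : Type :=
  (Fin n → Fin (n + 1) → Fin (n + 1)) × (Fin (n + 1) → Fin n → Fin (n + 1))

/-- The label on the north edge of the tile in row `i`, column `j`. -/
def labN {n : ℕ} (sst : GridState n) (i j : Fin n) : ℕ := (sst.2 i.castSucc j : ℕ)
/-- The label on the east edge of the tile in row `i`, column `j`. -/
def labE {n : ℕ} (sst : GridState n) (i j : Fin n) : ℕ := (sst.1 i j.succ : ℕ)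
/-- The label on the west edge of the tile in row `i`, column `j`. -/
def labW {n : ℕ} (sst : GridState n) (i j : Fin n) : ℕ := (sst.1 i j.castSucc : ℕ)
/-- The label on the south edge of the tile in row `i`, column `j`. -/
def labS {n : ℕ} (sst : GridState n) (i j : Fin n) : ℕ := (sst.2 i.succ j : ℕ)

/-- Boundary label `κ_u` on the right side (0-based row `i`, 1-based pipe labels). -/
def kappaLab (k : ℕ) (u : Equiv.Perm ℕ) (i : ℕ) : ℕ :=
  if u⁻¹ i < k then u⁻¹ i + 1 else 0

/-- Boundary label `θ_v` on the top side (0-based column `j`, 1-based pipe labels). -/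
def thetaLab (k : ℕ) (v : Equiv.Perm ℕ) (j : ℕ) : ℕ :=
  if k ≤ v⁻¹ j then v⁻¹ j + 1 else 0

/-- Boundary label `η_w` on the bottom side (0-based column `j`, 1-based pipe labels). -/
def etaLab (w : Equiv.Perm ℕ) (j : ℕ) : ℕ := w⁻¹ j + 1

/-- The boundary condition for pipe puzzles for `(u, v, w)`: left edges all `0`,
right edges `κ_u`, top edges `θ_v`, bottom edges `η_w`. -/
def BoundaryCond (n k : ℕ) (u v w : Equiv.Perm ℕ) (sst : GridState n) : Prop :=
  (∀ i : Fin n, (sst.1 i 0 : ℕ) = 0) ∧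
  (∀ i : Fin n, (sst.1 i (Fin.last n) : ℕ) = kappaLab k u (i : ℕ)) ∧
  (∀ j : Fin n, (sst.2 0 j : ℕ) = thetaLab k v (j : ℕ)) ∧
  (∀ j : Fin n, (sst.2 (Fin.last n) j : ℕ) = etaLab w (j : ℕ))

/-- The admissible local configurations (tiles) of a pipe puzzle, in terms of the
four edge labels `N, E, W, S` around a tile:  the empty tile, the vertical pipe,
the horizontal pipe, the crossing (with the horizontal pipe carrying the smaller
label), the two elbows `⌟` and `⌐` (labels `≤ k` coming from the right side,
labels `> k` from the top side), and the bumping tiles (with the stated label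
restrictions). -/
def LAdm (k N E W S : ℕ) : Prop :=
  (N = 0 ∧ E = 0 ∧ W = 0 ∧ S = 0) ∨
  (E = 0 ∧ W = 0 ∧ 0 < N ∧ N = S) ∨
  (N = 0 ∧ S = 0 ∧ 0 < E ∧ E = W) ∨
  (0 < E ∧ E = W ∧ E < N ∧ N = S) ∨
  (E = 0 ∧ S = 0 ∧ 0 < N ∧ N = W ∧ N ≤ k) ∨
  (E = 0 ∧ S = 0 ∧ N = W ∧ k < N) ∨
  (N = 0 ∧ W = 0 ∧ 0 < E ∧ E = S ∧ E ≤ k) ∨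
  (N = 0 ∧ W = 0 ∧ E = S ∧ k < E) ∨
  (0 < E ∧ E = S ∧ E < N ∧ N = W ∧ N ≤ k) ∨
  (k < E ∧ E = S ∧ E < N ∧ N = W) ∨
  (0 < N ∧ N = W ∧ N ≤ k ∧ E = S ∧ k < E)

/-- The admissible local configurations of a Schubert pipe puzzle (no bumping
tiles; crossings have the horizontal pipe carrying the smaller label). -/
def LAdm0 (N E W S : ℕ) : Prop :=
  (N = 0 ∧ E = 0 ∧ W = 0 ∧ S = 0) ∨
  (E = 0 ∧ W = 0 ∧ 0 < N ∧ N = S) ∨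
  (N = 0 ∧ S = 0 ∧ 0 < E ∧ E = W) ∨
  (0 < E ∧ E = W ∧ E < N ∧ N = S) ∨
  (E = 0 ∧ S = 0 ∧ 0 < N ∧ N = W) ∨
  (N = 0 ∧ W = 0 ∧ 0 < E ∧ E = S)

/-- The vertex weight `L(x; N, E, W, S)` of the lattice model (equivalently, the
weight of the corresponding pipe-puzzle tile), with spectral parameter `x`. -/
def Lwt {K : Type*} [Field K] (β : K) (k : ℕ) (x : K) (N E W S : ℕ) : K :=
  if N = 0 ∧ E = 0 ∧ W = 0 ∧ S = 0 then x
  else if E = 0 ∧ W = 0 ∧ 0 < N ∧ N = S then 1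
  else if N = 0 ∧ S = 0 ∧ 0 < E ∧ E = W then 1
  else if 0 < E ∧ E = W ∧ E < N ∧ N = S then 1
  else if E = 0 ∧ S = 0 ∧ 0 < N ∧ N = W ∧ N ≤ k then 1 + β * x
  else if E = 0 ∧ S = 0 ∧ N = W ∧ k < N then 1
  else if N = 0 ∧ W = 0 ∧ 0 < E ∧ E = S ∧ E ≤ k then 1
  else if N = 0 ∧ W = 0 ∧ E = S ∧ k < E then 1 + β * x
  else if 0 < E ∧ E = S ∧ E < N ∧ N = W ∧ N ≤ k then β
  else if k < E ∧ E = S ∧ E < N ∧ N = W then β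
  else if 0 < N ∧ N = W ∧ N ≤ k ∧ E = S ∧ k < E then β * (1 + β * x)
  else 0

/-- The set of pipe puzzles for `(u, v, w)` (with separated-descent parameter `k`),
encoded as admissible states of the lattice model. -/
def PP (n k : ℕ) (u v w : Equiv.Perm ℕ) : Set (GridState n) :=
  {sst | BoundaryCond n k u v w sst ∧
    ∀ i j : Fin n, LAdm k (labN sst i j) (labE sst i j) (labW sst i j) (labS sst i j)}

/-- The set of Schubert pipe puzzles for `(u, v, w)`. -/
def PP0 (n k : ℕ) (u v w : Equiv.Perm ℕ) : Set (GridState n) :=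
  {sst | BoundaryCond n k u v w sst ∧
    ∀ i j : Fin n, LAdm0 (labN sst i j) (labE sst i j) (labW sst i j) (labS sst i j)}

/-- The weight `wt(π)` of a pipe puzzle: the product over all tiles, the tile in
row `i` and column `j` having spectral parameter `t_j ⊖ y_i`. -/
def stateWt {K : Type*} [Field K] (β : K) (k : ℕ) (t y : ℕ → K) {n : ℕ}
    (sst : GridState n) : K :=
  ∏ i : Fin n, ∏ j : Fin n,
    Lwt β k (ominus β (t (j : ℕ)) (y (i : ℕ)))
      (labN sst i j) (labE sst i j) (labW sst i j) (labS sst i j)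

/-- The Schubert weight `wt₀(π)`: the product of `t_j - y_i` over the positions
`(i, j)` of the empty tiles. -/
def stateWt0 {K : Type*} [Field K] (t y : ℕ → K) {n : ℕ} (sst : GridState n) : K :=
  ∏ i : Fin n, ∏ j : Fin n,
    if labN sst i j = 0 ∧ labE sst i j = 0 ∧ labW sst i j = 0 ∧ labS sst i j = 0
    then t (j : ℕ) - y (i : ℕ) else 1

/-! ### Auxiliary lemmas for the proof -/

section Aux

open Finset

lemma InSn.apply_lt {n : ℕ} {u : Equiv.Perm ℕ} (hu : InSn n u) {a : ℕ} (ha : a < n) :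
    u a < n := by
  by_contra h
  push_neg at h
  have h1 := hu (u a) h
  have h2 : u a = a := u.injective h1
  omega

lemma InSn.finPerm {n : ℕ} {u : Equiv.Perm ℕ} (hu : InSn n u) : FinPerm u := ⟨n, hu⟩

lemma InSn.mul {n : ℕ} {u v : Equiv.Perm ℕ} (hu : InSn n u) (hv : InSn n v) :
    InSn n (u * v) := fun j hj => by
  simp [Equiv.Perm.mul_apply, hv j hj, hu j hj]

lemma inSn_sTr {n i : ℕ} (hi : i + 1 < n) : InSn n (sTr i) := fun j hj =>
  Equiv.swap_apply_of_ne_of_ne (by omega) (by omega)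

lemma sTr_apply (i a : ℕ) : sTr i a = if a = i then i + 1 else if a = i + 1 then i else a := by
  simp [sTr, Equiv.swap_apply_def]

lemma sTr_mul_self (i : ℕ) : sTr i * sTr i = 1 := Equiv.swap_mul_self _ _

lemma revPerm_apply (n a : ℕ) : revPerm n a = if a < n then n - 1 - a else a := rfl

/-- Inversions of an `S_n`-permutation lie in `[0,n)²`. -/
lemma inv_set_subset {n : ℕ} {w : Equiv.Perm ℕ} (hw : InSn n w) :
    {p : ℕ × ℕ | p.1 < p.2 ∧ w p.2 < w p.1} ⊆ Set.Iio n ×ˢ Set.Iio n := by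
  rintro ⟨a, b⟩ ⟨hab, hw'⟩
  dsimp only at hab hw'
  simp only [Set.mem_prod, Set.mem_Iio]
  by_contra h
  push_neg at h
  rcases lt_or_ge a n with ha | ha
  · have hb := h ha
    have := hw b hb
    have := hw.apply_lt ha
    omega
  · have h1 := hw a ha
    have h2 := hw b (by omega)
    omega

lemma uinv_lt {n : ℕ} {u : Equiv.Perm ℕ} {i : ℕ} (hu : InSn n u) (hi : i + 1 < n)
    (h : len (sTr i * u) < len u) : u⁻¹ (i + 1) < u⁻¹ i := by
  rcases lt_trichotomy (u⁻¹ (i+1)) (u⁻¹ i) with h1 | h1 | h1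
  · exact h1
  · have := u⁻¹.injective h1; omega
  · exfalso
    have hsub : {p : ℕ × ℕ | p.1 < p.2 ∧ u p.2 < u p.1} ⊆
        {p : ℕ × ℕ | p.1 < p.2 ∧ (sTr i * u) p.2 < (sTr i * u) p.1} := by
      rintro ⟨a, b⟩ ⟨hab, hinv⟩
      dsimp only at hab hinv
      refine ⟨hab, ?_⟩
      simp only [Equiv.Perm.mul_apply, sTr_apply]
      have hne : ¬(u b = i ∧ u a = i + 1) := by
        rintro ⟨e1, e2⟩
        have hb : u⁻¹ i = b := by rw [← e1, Equiv.Perm.inv_def, Equiv.symm_apply_apply]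
        have ha : u⁻¹ (i+1) = a := by rw [← e2, Equiv.Perm.inv_def, Equiv.symm_apply_apply]
        omega
      split_ifs <;> omega
    have hfin : {p : ℕ × ℕ | p.1 < p.2 ∧ (sTr i * u) p.2 < (sTr i * u) p.1}.Finite :=
      Set.Finite.subset ((Set.finite_Iio n).prod (Set.finite_Iio n))
        (inv_set_subset ((inSn_sTr hi).mul hu))
    have hle := Set.ncard_le_ncard hsub hfin
    simp only [len] at h
    omega

lemma all_descent_eq_revPerm {n : ℕ} {u : Equiv.Perm ℕ} (hu : InSn n u)
    (h : ∀ a, a + 1 < n → u (a+1) < u a) : u = revPerm n := by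
  have up : ∀ d k, k < n → n - k ≤ d + 1 → n - 1 - k ≤ u k := by
    intro d
    induction d with
    | zero => intro k hk h1; omega
    | succ d ih =>
      intro k hk h1
      rcases Nat.lt_or_ge (k+1) n with hk1 | hk1
      · have := ih (k+1) hk1 (by omega)
        have := h k hk1
        omega
      · omega
  have down : ∀ k, k < n → u k ≤ n - 1 - k := by
    intro k
    induction k with
    | zero => intro hk; have := hu.apply_lt hk; omega
    | succ k ih =>
      intro hk
      have h1 := ih (by omega)
      have h2 := h k hk
      omega
  ext a
  rcases Nat.lt_or_ge a n with ha | ha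
  · have h1 := up n a ha (by omega)
    have h2 := down a ha
    rw [revPerm_apply, if_pos ha]
    omega
  · rw [hu a ha, revPerm_apply, if_neg (by omega)]

variable {K : Type*} [Field K]

/-- A single factor of the staircase product. -/
def gfac (β : K) (y : ℕ → K) (a b : ℕ) : MvPolynomial ℕ K :=
  C ((1 + β * y b)⁻¹) * (X a - C (y b))

lemma rename_gfac (β : K) (y : ℕ → K) (σ : ℕ → ℕ) (a b : ℕ) :
    rename σ (gfac β y a b) = gfac β y (σ a) b := by
  simp [gfac, map_mul, map_sub, rename_C, rename_X]

lemma gfac_swapVal_of_ne (β : K) (y : ℕ → K) {i b : ℕ} (a : ℕ) (h1 : b ≠ i)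
    (h2 : b ≠ i + 1) : gfac β (swapVal y i) a b = gfac β y a b := by
  simp [gfac, swapVal, h1, h2]

lemma gfac_swapVal (β : K) (y : ℕ → K) (i a b : ℕ) :
    gfac β (swapVal y i) a b = gfac β y a (Equiv.swap i (i+1) b) := by
  rcases eq_or_ne b i with rfl | h1
  · simp [gfac, swapVal, Equiv.swap_apply_left]
  rcases eq_or_ne b (i+1) with rfl | h2
  · simp [gfac, swapVal, Equiv.swap_apply_right, h1.symm]
  · rw [gfac_swapVal_of_ne β y a h1 h2, Equiv.swap_apply_of_ne_of_ne h1 h2]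

lemma swapVal_ne_zero {β : K} {y : ℕ → K} (hy : ∀ j, 1 + β * y j ≠ 0) (i : ℕ) :
    ∀ b, 1 + β * swapVal y i b ≠ 0 := by
  intro b; unfold swapVal; split_ifs <;> apply hy

end Aux

section StarLemma

open Finset

variable {K : Type*} [Field K]

/-- The base case of the `y`-recursion: `u = revPerm n`. -/
lemma star_base (β : K) (G : (ℕ → K) → Equiv.Perm ℕ → MvPolynomial ℕ K)
    (hG : GrothFamily β G) (n i : ℕ) (hi : i + 1 < n)
    (y : ℕ → K) (hy : ∀ j, 1 + β * y j ≠ 0) :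
    C (y i - y (i+1)) * G y (sTr i * revPerm n) + C (1 + β * y i) * G y (revPerm n)
      - C (1 + β * y (i+1)) * G (swapVal y i) (revPerm n) = 0 := by
  set j := n - 2 - i with hjdef
  have hji : n - 1 - j = i + 1 := by omega
  have hj1i : n - 1 - (j+1) = i := by omega
  have hjn : j + 1 < n := by omega
  have hy' := swapVal_ne_zero hy i
  -- the permutation identity `w₀ s_j = s_i w₀`
  have hperm : revPerm n * sTr j = sTr i * revPerm n := by
    ext a
    simp only [Equiv.Perm.mul_apply, sTr_apply, revPerm_apply]
    split_ifs <;> omega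
  have hdesc : revPerm n (j+1) < revPerm n j := by
    simp only [revPerm_apply]; split_ifs <;> omega
  have E := (hG y hy).2 (revPerm n) j hdesc
  rw [hperm] at E
  have hPn : G y (revPerm n) = ∏ a ∈ range n, ∏ b ∈ range (n - 1 - a), gfac β y a b :=
    (hG y hy).1 n
  have hPn' : G (swapVal y i) (revPerm n)
      = ∏ a ∈ range n, ∏ b ∈ range (n - 1 - a), gfac β (swapVal y i) a b :=
    (hG (swapVal y i) hy').1 n
  have hjmem : j ∈ range n := mem_range.mpr (by omega)
  have hj1mem : j + 1 ∈ (range n).erase j :=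
    Finset.mem_erase.mpr ⟨by omega, mem_range.mpr hjn⟩
  have split : ∀ F : ℕ → MvPolynomial ℕ K,
      ∏ a ∈ range n, F a
        = F j * (F (j+1) * ∏ a ∈ ((range n).erase j).erase (j+1), F a) := by
    intro F
    rw [← Finset.mul_prod_erase (range n) F hjmem,
        ← Finset.mul_prod_erase _ F hj1mem]
  set Q : MvPolynomial ℕ K :=
    (∏ b ∈ range i, gfac β y j b) * (∏ b ∈ range i, gfac β y (j+1) b) *
      ∏ a ∈ ((range n).erase j).erase (j+1), ∏ b ∈ range (n - 1 - a), gfac β y a b with hQ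
  have R1 : G y (revPerm n) = gfac β y j i * Q := by
    rw [hPn, split, hji, hj1i, Finset.prod_range_succ, hQ]
    ring
  have R2 : rename (⇑(Equiv.swap j (j+1))) (G y (revPerm n)) = gfac β y (j+1) i * Q := by
    have step1 : rename (⇑(Equiv.swap j (j+1))) (G y (revPerm n))
        = ∏ a ∈ range n, ∏ b ∈ range (n - 1 - a), gfac β y (Equiv.swap j (j+1) a) b := by
      rw [hPn, map_prod]
      refine Finset.prod_congr rfl fun a _ => ?_
      rw [map_prod]
      exact Finset.prod_congr rfl fun b _ => rename_gfac β y _ a b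
    rw [step1, split, Equiv.swap_apply_left, Equiv.swap_apply_right, hji, hj1i,
      Finset.prod_range_succ]
    have hrest : ∏ a ∈ ((range n).erase j).erase (j+1),
        ∏ b ∈ range (n - 1 - a), gfac β y (Equiv.swap j (j+1) a) b
        = ∏ a ∈ ((range n).erase j).erase (j+1), ∏ b ∈ range (n - 1 - a), gfac β y a b := by
      refine Finset.prod_congr rfl fun a ha => ?_
      rw [Finset.mem_erase, Finset.mem_erase] at ha
      rw [Equiv.swap_apply_of_ne_of_ne ha.2.1 ha.1]
    rw [hrest, hQ]
    ring
  have R3 : G (swapVal y i) (revPerm n)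
      = C ((1 + β * y (i+1))⁻¹) * (X j - C (y (i+1))) * Q := by
    rw [hPn', split]
    have hrowj : ∏ b ∈ range (n - 1 - j), gfac β (swapVal y i) j b
        = (∏ b ∈ range i, gfac β y j b) * (C ((1 + β * y (i+1))⁻¹) * (X j - C (y (i+1)))) := by
      rw [hji, Finset.prod_range_succ]
      congr 1
      · exact Finset.prod_congr rfl fun b hb =>
          gfac_swapVal_of_ne β y j (by simp at hb; omega) (by simp at hb; omega)
      · simp [gfac, swapVal]
    have hrowj1 : ∏ b ∈ range (n - 1 - (j+1)), gfac β (swapVal y i) (j+1) b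
        = ∏ b ∈ range i, gfac β y (j+1) b := by
      rw [hj1i]
      exact Finset.prod_congr rfl fun b hb =>
        gfac_swapVal_of_ne β y (j+1) (by simp at hb; omega) (by simp at hb; omega)
    have hrest : ∏ a ∈ ((range n).erase j).erase (j+1),
        ∏ b ∈ range (n - 1 - a), gfac β (swapVal y i) a b
        = ∏ a ∈ ((range n).erase j).erase (j+1),
            ∏ b ∈ range (n - 1 - a), gfac β y a b := by
      refine Finset.prod_congr rfl fun a ha => ?_
      rw [Finset.mem_erase, Finset.mem_erase, Finset.mem_range] at ha
      rcases le_or_gt (n - 1 - a) i with hm | hm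
      · exact Finset.prod_congr rfl fun b hb =>
          gfac_swapVal_of_ne β y a (by simp at hb; omega) (by simp at hb; omega)
      · have hm2 : i + 1 < n - 1 - a := by omega
        calc ∏ b ∈ range (n - 1 - a), gfac β (swapVal y i) a b
            = ∏ b ∈ range (n - 1 - a), gfac β y a (Equiv.swap i (i+1) b) :=
              Finset.prod_congr rfl fun b _ => gfac_swapVal β y i a b
          _ = ∏ b ∈ range (n - 1 - a), gfac β y a b := by
              refine Finset.prod_equiv (Equiv.swap i (i+1)) (fun b => ?_) (fun b _ => rfl)
              simp only [Finset.mem_range, Equiv.swap_apply_def]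
              split_ifs <;> omega
    rw [hrowj, hrowj1, hrest, hQ]
    ring
  have hCA : C ((1 + β * y i)⁻¹) * (1 + C β * C (y i)) = (1 : MvPolynomial ℕ K) := by
    have h1 : ((1 : MvPolynomial ℕ K) + C β * C (y i)) = C (1 + β * y i) := by
      rw [map_add, map_one, map_mul]
    rw [h1, ← map_mul, inv_mul_cancel₀ (hy i), map_one]
  have hCB : C ((1 + β * y (i+1))⁻¹) * (1 + C β * C (y (i+1))) = (1 : MvPolynomial ℕ K) := by
    have h1 : ((1 : MvPolynomial ℕ K) + C β * C (y (i+1))) = C (1 + β * y (i+1)) := by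
      rw [map_add, map_one, map_mul]
    rw [h1, ← map_mul, inv_mul_cancel₀ (hy (i+1)), map_one]
  have hX : (X j - X (j+1) : MvPolynomial ℕ K) ≠ 0 :=
    sub_ne_zero_of_ne fun h => by have := X_injective h; omega
  have key : (X j - X (j+1)) * (C (y i - y (i+1)) * G y (sTr i * revPerm n)
      + C (1 + β * y i) * G y (revPerm n)
      - C (1 + β * y (i+1)) * G (swapVal y i) (revPerm n)) = 0 := by
    simp only [gfac] at R1 R2
    simp only [map_sub, map_add, map_mul, map_one] at E R1 R2 R3 ⊢
    linear_combination (C (y i) - C (y (i+1))) * E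
      + ((C (y i) - C (y (i+1))) * (1 + C β * X (j+1))
          + (X j - X (j+1)) * (1 + C β * C (y i))) * R1
      - (C (y i) - C (y (i+1))) * (1 + C β * X j) * R2
      - (X j - X (j+1)) * (1 + C β * C (y (i+1))) * R3
      + (X j - C (y (i+1))) * (X j - X (j+1)) * Q * hCA
      - (X j - C (y (i+1))) * (X j - X (j+1)) * Q * hCB
  rcases mul_eq_zero.mp key with h | h
  · exact absurd h hX
  · exact h

end StarLemma

section StarInduction

open Finset

variable {K : Type*} [Field K]

/-- The `y`-variable Demazure recursion for double Grothendieck polynomials,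
with the denominator `y_i - y_{i+1}` cleared. -/
lemma star (β : K) (G : (ℕ → K) → Equiv.Perm ℕ → MvPolynomial ℕ K)
    (hG : GrothFamily β G) (n i : ℕ) (hi : i + 1 < n)
    (y : ℕ → K) (hy : ∀ j, 1 + β * y j ≠ 0) :
    ∀ m : ℕ, ∀ u : Equiv.Perm ℕ, InSn n u → u⁻¹ (i+1) < u⁻¹ i →
      (∑ a ∈ range n, a * u a) ≤ m →
      C (y i - y (i+1)) * G y (sTr i * u) + C (1 + β * y i) * G y u
        - C (1 + β * y (i+1)) * G (swapVal y i) u = 0 := by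
  have hy' := swapVal_ne_zero hy i
  intro m
  induction m with
  | zero =>
    intro u hu hcond hM
    by_cases hall : ∀ a, a + 1 < n → u (a+1) < u a
    · rw [all_descent_eq_revPerm hu hall]
      exact star_base β G hG n i hi y hy
    · exfalso
      push_neg at hall
      obtain ⟨j, hjn, hasc⟩ := hall
      have hne : u j ≠ u (j+1) := fun h => by have := u.injective h; omega
      have h1 : 1 ≤ u (j+1) := by omega
      have hterm : (j+1) * u (j+1) ≤ ∑ a ∈ range n, a * u a :=
        Finset.single_le_sum (f := fun a => a * u a) (fun a _ => Nat.zero_le _)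
          (mem_range.mpr hjn)
      have : 1 ≤ (j+1) * u (j+1) := Nat.one_le_iff_ne_zero.mpr (by positivity)
      omega
  | succ m ih =>
    intro u hu hcond hM
    by_cases hall : ∀ a, a + 1 < n → u (a+1) < u a
    · rw [all_descent_eq_revPerm hu hall]
      exact star_base β G hG n i hi y hy
    push_neg at hall
    obtain ⟨j, hjn, hasc'⟩ := hall
    have hne : u j ≠ u (j+1) := fun h => by have := u.injective h; omega
    have hasc : u j < u (j+1) := by omega
    set u' := u * sTr j with hu'def
    have hval : ∀ a, u' a = u (Equiv.swap j (j+1) a) := fun a => rfl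
    have h1 : u' j = u (j+1) := by rw [hval, Equiv.swap_apply_left]
    have h2 : u' (j+1) = u j := by rw [hval, Equiv.swap_apply_right]
    have hu'In : InSn n u' := hu.mul (inSn_sTr hjn)
    -- the inverse condition for u'
    have hinvap : ∀ x, u'⁻¹ x = Equiv.swap j (j+1) (u⁻¹ x) := by
      intro x
      rw [hu'def, mul_inv_rev]
      have : (sTr j)⁻¹ = sTr j := by
        simp [sTr, Equiv.swap_inv]
      rw [this]
      rfl
    have hcondne : ¬(u⁻¹ (i+1) = j ∧ u⁻¹ i = j + 1) := by
      rintro ⟨e1, e2⟩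
      have b1 : u j = i + 1 := by rw [← e1, Equiv.Perm.inv_def, Equiv.apply_symm_apply]
      have b2 : u (j+1) = i := by rw [← e2, Equiv.Perm.inv_def, Equiv.apply_symm_apply]
      omega
    have hcond' : u'⁻¹ (i+1) < u'⁻¹ i := by
      rw [hinvap, hinvap]
      simp only [Equiv.swap_apply_def]
      split_ifs <;> omega
    -- the measure decreases
    have hjmem : j ∈ range n := mem_range.mpr (by omega)
    have hj1mem : j + 1 ∈ (range n).erase j :=
      Finset.mem_erase.mpr ⟨by omega, mem_range.mpr hjn⟩
    have hMsplit : ∀ F : ℕ → ℕ, ∑ a ∈ range n, F a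
        = F j + (F (j+1) + ∑ a ∈ ((range n).erase j).erase (j+1), F a) := by
      intro F
      rw [← Finset.add_sum_erase (range n) F hjmem,
          ← Finset.add_sum_erase _ F hj1mem]
    have hM' : ∑ a ∈ range n, a * u' a ≤ m := by
      have hrest : ∑ a ∈ ((range n).erase j).erase (j+1), a * u' a
          = ∑ a ∈ ((range n).erase j).erase (j+1), a * u a := by
        refine Finset.sum_congr rfl fun a ha => ?_
        rw [Finset.mem_erase, Finset.mem_erase] at ha
        rw [hval, Equiv.swap_apply_of_ne_of_ne ha.2.1 ha.1]
      have e1 := hMsplit (fun a => a * u' a)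
      have e2 := hMsplit (fun a => a * u a)
      rw [e2] at hM
      rw [e1, hrest, h1, h2]
      have h3 : j * u (j+1) + (j+1) * u j + 1 ≤ j * u j + (j+1) * u (j+1) := by nlinarith
      omega
    -- induction hypothesis at u'
    have B0 := ih u' hu'In hcond' hM'
    have rB0 := congrArg (rename (⇑(Equiv.swap j (j+1)))) B0
    simp only [map_add, map_sub, map_mul, map_one, rename_C, map_zero] at rB0
    -- the three x-recursions
    have hd1 : u' (j+1) < u' j := by omega
    have hu's : u' * sTr j = u := by
      rw [hu'def, mul_assoc, sTr_mul_self, mul_one]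
    have E1 := (hG y hy).2 u' j hd1
    rw [hu's] at E1
    have E1' := (hG (swapVal y i) hy').2 u' j hd1
    rw [hu's] at E1'
    have hd2 : (sTr i * u') (j+1) < (sTr i * u') j := by
      have c1 : (sTr i * u') (j+1) = sTr i (u j) := by
        simp only [Equiv.Perm.mul_apply, h2]
      have c2 : (sTr i * u') j = sTr i (u (j+1)) := by
        simp only [Equiv.Perm.mul_apply, h1]
      rw [c1, c2]
      have hne2 : ¬(u j = i ∧ u (j+1) = i + 1) := by
        rintro ⟨e1, e2⟩
        have b1 : u⁻¹ i = j := by rw [← e1, Equiv.Perm.inv_def, Equiv.symm_apply_apply]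
        have b2 : u⁻¹ (i+1) = j + 1 := by rw [← e2, Equiv.Perm.inv_def, Equiv.symm_apply_apply]
        omega
      simp only [sTr_apply]
      split_ifs <;> omega
    have hsis : (sTr i * u') * sTr j = sTr i * u := by
      rw [hu'def, mul_assoc, mul_assoc, sTr_mul_self, mul_one]
    have E2 := (hG y hy).2 (sTr i * u') j hd2
    rw [hsis] at E2
    -- assemble
    have hX : (X j - X (j+1) : MvPolynomial ℕ K) ≠ 0 :=
      sub_ne_zero_of_ne fun h => by have := X_injective h; omega
    have key : (X j - X (j+1)) * (C (y i - y (i+1)) * G y (sTr i * u)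
        + C (1 + β * y i) * G y u - C (1 + β * y (i+1)) * G (swapVal y i) u) = 0 := by
      simp only [map_sub, map_add, map_mul, map_one] at B0 E1 E1' E2 ⊢
      linear_combination (C (y i) - C (y (i+1))) * E2 + (1 + C β * C (y i)) * E1
        - (1 + C β * C (y (i+1))) * E1' + (1 + C β * X (j+1)) * B0 - (1 + C β * X j) * rB0
    rcases mul_eq_zero.mp key with h | h
    · exact absurd h hX
    · exact h

end StarInduction

/-- Proposition `indonu` of the paper.  Let `u, v, w ∈ S_n` and
let `s_i` be a simple transposition with `ℓ(s_i u) < ℓ(u)`.  Then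
`c_{s_i u, v}^w = -((1+βy_i)/(y_i - y_{i+1}))·c_{u,v}^w
  + ((1+βy_{i+1})/(y_i - y_{i+1}))·c_{u,v}^w|_{y_i ↔ y_{i+1}}`. -/
theorem structure_constant_recurrence_in_u
    {K : Type*} [Field K] (β : K)
    (G : (ℕ → K) → Equiv.Perm ℕ → MvPolynomial ℕ K)
    (c : (ℕ → K) → (ℕ → K) → Equiv.Perm ℕ → Equiv.Perm ℕ → Equiv.Perm ℕ → K)
    (hG : GrothFamily β G) (hc : StructConsts β G c)
    (n : ℕ) (u v w : Equiv.Perm ℕ) (hu : InSn n u) (hv : InSn n v) (hw : InSn n w)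
    (i : ℕ) (hi : i + 1 < n)
    (hlen : len (sTr i * u) < len u)
    (t y : ℕ → K)
    (ht : ∀ j, 1 + β * t j ≠ 0) (hy : ∀ j, 1 + β * y j ≠ 0)
    (hyy : y i ≠ y (i + 1))
    (hLI : LinearIndependent K fun σ : {σ : Equiv.Perm ℕ // FinPerm σ} => G t σ.1) :
    c t y (sTr i * u) v w =
      -((1 + β * y i) / (y i - y (i + 1))) * c t y u v w
        + ((1 + β * y (i + 1)) / (y i - y (i + 1))) * c t (swapVal y i) u v w := by
    classical
  have hy' := swapVal_ne_zero hy i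
  have hd : y i - y (i+1) ≠ 0 := sub_ne_zero_of_ne hyy
  have hinv : u⁻¹ (i+1) < u⁻¹ i := uinv_lt hu hi hlen
  have B := star β G hG n i hi y hy (∑ a ∈ Finset.range n, a * u a) u hu hinv le_rfl
  have hprod : C (y i - y (i+1)) * (G y (sTr i * u) * G t v)
      + C (1 + β * y i) * (G y u * G t v)
      - C (1 + β * y (i+1)) * (G (swapVal y i) u * G t v) = 0 := by
    linear_combination G t v * B
  obtain ⟨hfin0, hz0, hsum0⟩ :=
    hc t y ht hy (sTr i * u) v ((inSn_sTr hi).mul hu).finPerm hv.finPerm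
  obtain ⟨hfin1, hz1, hsum1⟩ := hc t y ht hy u v hu.finPerm hv.finPerm
  obtain ⟨hfin2, hz2, hsum2⟩ := hc t (swapVal y i) ht hy' u v hu.finPerm hv.finPerm
  rw [hsum0, hsum1, hsum2] at hprod
  set T : Finset (Equiv.Perm ℕ) := ((hfin0.union hfin1).union hfin2).toFinset with hT
  have hmemT : ∀ σ : Equiv.Perm ℕ,
      (c t y (sTr i * u) v σ ≠ 0 ∨ c t y u v σ ≠ 0 ∨ c t (swapVal y i) u v σ ≠ 0) →
      σ ∈ T := by
    intro σ hσ
    rw [hT, Set.Finite.mem_toFinset]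
    rcases hσ with h | h | h
    · exact Or.inl (Or.inl h)
    · exact Or.inl (Or.inr h)
    · exact Or.inr h
  have conv : ∀ (c' : Equiv.Perm ℕ → K), (∀ σ, c' σ ≠ 0 → σ ∈ T) →
      ∑ᶠ σ : Equiv.Perm ℕ, C (c' σ) * G t σ = ∑ σ ∈ T, C (c' σ) * G t σ := by
    intro c' hc'
    apply finsum_eq_finset_sum_of_support_subset
    intro σ hσ
    simp only [Function.mem_support] at hσ
    have : c' σ ≠ 0 := by
      intro h0
      rw [h0, map_zero, zero_mul] at hσ
      exact hσ rfl
    exact hc' σ this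
  rw [conv _ (fun σ h => hmemT σ (Or.inl h)),
      conv _ (fun σ h => hmemT σ (Or.inr (Or.inl h))),
      conv _ (fun σ h => hmemT σ (Or.inr (Or.inr h))),
      Finset.mul_sum, Finset.mul_sum, Finset.mul_sum,
      ← Finset.sum_add_distrib, ← Finset.sum_sub_distrib] at hprod
  have hTfp : ∀ σ ∈ T, FinPerm σ := by
    intro σ hσ
    rw [hT, Set.Finite.mem_toFinset] at hσ
    by_contra hnf
    rcases hσ with (h | h) | h
    · exact h (hz0 σ hnf)
    · exact h (hz1 σ hnf)
    · exact h (hz2 σ hnf)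
  set f : Equiv.Perm ℕ → K := fun σ =>
    (y i - y (i+1)) * c t y (sTr i * u) v σ + (1 + β * y i) * c t y u v σ
      - (1 + β * y (i+1)) * c t (swapVal y i) u v σ with hf
  have hsum : ∑ σ ∈ T, f σ • G t σ = 0 := by
    rw [← hprod]
    refine Finset.sum_congr rfl fun σ _ => ?_
    rw [smul_eq_C_mul, hf]
    simp only [map_add, map_sub, map_mul]
    ring
  have hzero : ∀ σ ∈ T, f σ = 0 := by
    set s : Finset {σ : Equiv.Perm ℕ // FinPerm σ} :=
      T.attach.image (fun x => ⟨x.1, hTfp x.1 x.2⟩) with hs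
    have hinj : ∀ x ∈ T.attach, ∀ y ∈ T.attach,
        (⟨x.1, hTfp x.1 x.2⟩ : {σ : Equiv.Perm ℕ // FinPerm σ}) = ⟨y.1, hTfp y.1 y.2⟩ →
          x = y := by
      intro x _ y _ e
      exact Subtype.ext (congrArg (Subtype.val : {σ : Equiv.Perm ℕ // FinPerm σ} → Equiv.Perm ℕ) e)
    have hsum' : ∑ σ ∈ s, f σ.1 • G t σ.1 = 0 := by
      rw [hs]
      exact (Finset.sum_image hinj).trans
        ((Finset.sum_attach T (fun σ => f σ • G t σ)).trans hsum)
    have hli := linearIndependent_iff'.mp hLI s (fun σ => f σ.1) hsum'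
    intro σ hσ
    exact hli ⟨σ, hTfp σ hσ⟩
      (Finset.mem_image.mpr ⟨⟨σ, hσ⟩, Finset.mem_attach _ _, rfl⟩)
  have hfinal : (y i - y (i+1)) * c t y (sTr i * u) v w + (1 + β * y i) * c t y u v w
      - (1 + β * y (i+1)) * c t (swapVal y i) u v w = 0 := by
    by_cases hw' : w ∈ T
    · exact hzero w hw'
    · have c0 : c t y (sTr i * u) v w = 0 := by
        by_contra h0; exact hw' (hmemT w (Or.inl h0))
      have c1 : c t y u v w = 0 := by
        by_contra h0; exact hw' (hmemT w (Or.inr (Or.inl h0)))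
      have c2 : c t (swapVal y i) u v w = 0 := by
        by_contra h0; exact hw' (hmemT w (Or.inr (Or.inr h0)))
      rw [c0, c1, c2]
      ring
  field_simp
  linear_combination hfinal
end BPDPuzzle
end
end

section
/- Let u_0 ∈ S_n be defined by u_0(i)=n+1−i for i≤k and u_0(i)=i−k for k<i≤n, and let v ∈ S_n with mindes(v)≥k. If v ≠ id then PP(u_0,v,id) is empty; and PP(u_0,id,id) contains exactly one pipe puzzle, whose weight is ∏_{i=1}^{k} ∏_{j=1}^{n−i} (t_i ⊖ y_j). Consequently Σ_{π∈PP(u_0,v,id)} wt(π) equals ∏_{i=1}^{k}∏_{j=1}^{n−i}(t_i⊖y_j) if v=id and 0 otherwise. -/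
open MvPolynomial

noncomputable section

namespace BPDPuzzle

/-! ### Auxiliary material for the proof -/

/-- Target horizontal edge labels. -/
def Ht (n k i j : ℕ) : ℕ := if n ≤ i + k ∧ n ≤ i + j then n - i else 0

/-- Target vertical edge labels. -/
def Vt (n k i j : ℕ) : ℕ := if k ≤ j ∨ n ≤ i + j then j + 1 else 0

lemma lAdm_inv {k N E W S : ℕ} (h : LAdm k N E W S) :
    (N = S ∧ E = W) ∨ (N = W ∧ E = S) := by
  unfold LAdm at h; omega

def HHf {n : ℕ} (sst : GridState n) (a b : ℕ) : ℕ :=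
  if h : a < n ∧ b < n + 1 then (sst.1 ⟨a, h.1⟩ ⟨b, h.2⟩ : ℕ) else 0

def VVf {n : ℕ} (sst : GridState n) (a b : ℕ) : ℕ :=
  if h : a < n + 1 ∧ b < n then (sst.2 ⟨a, h.1⟩ ⟨b, h.2⟩ : ℕ) else 0

lemma HHf_eq {n : ℕ} (sst : GridState n) (a b : ℕ) (h1 : a < n) (h2 : b < n + 1) :
    HHf sst a b = (sst.1 ⟨a, h1⟩ ⟨b, h2⟩ : ℕ) := dif_pos ⟨h1, h2⟩

lemma VVf_eq {n : ℕ} (sst : GridState n) (a b : ℕ) (h1 : a < n + 1) (h2 : b < n) :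
    VVf sst a b = (sst.2 ⟨a, h1⟩ ⟨b, h2⟩ : ℕ) := dif_pos ⟨h1, h2⟩

lemma labN_eq {n : ℕ} (sst : GridState n) (a b : ℕ) (ha : a < n) (hb : b < n) :
    labN sst ⟨a, ha⟩ ⟨b, hb⟩ = VVf sst a b := (VVf_eq sst a b (by omega) hb).symm

lemma labS_eq {n : ℕ} (sst : GridState n) (a b : ℕ) (ha : a < n) (hb : b < n) :
    labS sst ⟨a, ha⟩ ⟨b, hb⟩ = VVf sst (a + 1) b := (VVf_eq sst (a + 1) b (by omega) hb).symm

lemma labW_eq {n : ℕ} (sst : GridState n) (a b : ℕ) (ha : a < n) (hb : b < n) :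
    labW sst ⟨a, ha⟩ ⟨b, hb⟩ = HHf sst a b := (HHf_eq sst a b ha (by omega)).symm

lemma labE_eq {n : ℕ} (sst : GridState n) (a b : ℕ) (ha : a < n) (hb : b < n) :
    labE sst ⟨a, ha⟩ ⟨b, hb⟩ = HHf sst a (b + 1) := (HHf_eq sst a (b + 1) ha (by omega)).symm

lemma inv_of_mem {n k : ℕ} {u v w : Equiv.Perm ℕ} {sst : GridState n}
    (hsst : sst ∈ PP n k u v w) (a b : ℕ) (ha : a < n) (hb : b < n) :
    (VVf sst a b = VVf sst (a + 1) b ∧ HHf sst a (b + 1) = HHf sst a b) ∨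
    (VVf sst a b = HHf sst a b ∧ HHf sst a (b + 1) = VVf sst (a + 1) b) := by
  have h := lAdm_inv (hsst.2 ⟨a, ha⟩ ⟨b, hb⟩)
  rwa [labN_eq, labS_eq, labW_eq, labE_eq] at h

lemma u0_inv {n k : ℕ} (hk : k ≤ n) (u₀ : Equiv.Perm ℕ)
    (hu₀ : ∀ j, u₀ j = if j < k then n - 1 - j else if j < n then j - k else j) (i : ℕ) :
    u₀⁻¹ i = if n ≤ i + k ∧ i < n then n - 1 - i else if i + k < n then i + k else i := by
  rw [Equiv.Perm.inv_eq_iff_eq, hu₀]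
  split_ifs <;> omega

lemma kappa_eq {n k : ℕ} (hk : k ≤ n) (u₀ : Equiv.Perm ℕ)
    (hu₀ : ∀ j, u₀ j = if j < k then n - 1 - j else if j < n then j - k else j)
    (i : ℕ) (hi : i < n) : kappaLab k u₀ i = Ht n k i n := by
  unfold kappaLab Ht
  rw [u0_inv hk u₀ hu₀ i]
  split_ifs <;> omega

lemma eta_one (j : ℕ) : etaLab 1 j = j + 1 := by simp [etaLab]

lemma theta_one (k j : ℕ) : thetaLab k 1 j = if k ≤ j then j + 1 else 0 := by simp [thetaLab]

/-- Boundary conditions in `HHf`/`VVf` form. -/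
lemma bc_HL {n k : ℕ} {u v w : Equiv.Perm ℕ} {sst : GridState n}
    (h : BoundaryCond n k u v w sst) (a : ℕ) (ha : a < n) : HHf sst a 0 = 0 := by
  rw [HHf_eq sst a 0 ha (by omega)]; exact h.1 ⟨a, ha⟩

lemma bc_HR {n k : ℕ} {u v w : Equiv.Perm ℕ} {sst : GridState n}
    (h : BoundaryCond n k u v w sst) (a : ℕ) (ha : a < n) :
    HHf sst a n = kappaLab k u a := by
  rw [HHf_eq sst a n ha (by omega)]; exact h.2.1 ⟨a, ha⟩

lemma bc_VT {n k : ℕ} {u v w : Equiv.Perm ℕ} {sst : GridState n}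
    (h : BoundaryCond n k u v w sst) (b : ℕ) (hb : b < n) :
    VVf sst 0 b = thetaLab k v b := by
  rw [VVf_eq sst 0 b (by omega) hb]; exact h.2.2.1 ⟨b, hb⟩

lemma bc_VB {n k : ℕ} {u v w : Equiv.Perm ℕ} {sst : GridState n}
    (h : BoundaryCond n k u v w sst) (b : ℕ) (hb : b < n) :
    VVf sst n b = etaLab w b := by
  rw [VVf_eq sst n b (by omega) hb]; exact h.2.2.2 ⟨b, hb⟩

lemma forced {n k : ℕ} (hk : k ≤ n) {u₀ v : Equiv.Perm ℕ}
    (hu₀ : ∀ j, u₀ j = if j < k then n - 1 - j else if j < n then j - k else j)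
    {sst : GridState n} (hsst : sst ∈ PP n k u₀ v 1) :
    (∀ a, a ≤ n → ∀ b, b < n → VVf sst a b = Vt n k a b) ∧
    (∀ a, a < n → ∀ b, b ≤ n → HHf sst a b = Ht n k a b) := by
  have rowstep : ∀ i, i < n → (∀ b, b < n → VVf sst (i+1) b = Vt n k (i+1) b) →
      (∀ b, b ≤ n → HHf sst i b = Ht n k i b) ∧
      (∀ b, b < n → VVf sst i b = Vt n k i b) := by
    intro i hi hrow
    have left : ∀ b, b ≤ min k (n - 1 - i) → HHf sst i b = 0 := by
      intro b
      induction b with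
      | zero => intro _; exact bc_HL hsst.1 i hi
      | succ b ih =>
        intro hb
        have h1 := ih (by omega)
        have h2 := hrow b (by omega)
        have h3 := inv_of_mem hsst i b hi (by omega)
        have h4 : Vt n k (i + 1) b = 0 := by unfold Vt; split_ifs <;> omega
        omega
    have right : ∀ e, e ≤ n - (min k (n - 1 - i) + 1) →
        HHf sst i (n - e) = Ht n k i (n - e) := by
      intro e
      induction e with
      | zero =>
        intro _
        simp only [Nat.sub_zero]
        rw [bc_HR hsst.1 i hi, kappa_eq hk u₀ hu₀ i hi]
      | succ e ih =>
        intro he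
        have hb1 : n - e = (n - (e + 1)) + 1 := by omega
        have h1 := ih (by omega)
        rw [hb1] at h1
        have h2 := hrow (n - (e + 1)) (by omega)
        have h3 := inv_of_mem hsst i (n - (e + 1)) hi (by omega)
        unfold Ht at h1 ⊢
        unfold Vt at h2
        split_ifs at h1 h2 ⊢ <;> omega
    have hHrow : ∀ b, b ≤ n → HHf sst i b = Ht n k i b := by
      intro b hb
      rcases le_or_gt b (min k (n - 1 - i)) with h | h
      · rw [left b h]; unfold Ht; split_ifs <;> omega
      · have := right (n - b) (by omega)
        rwa [show n - (n - b) = b by omega] at this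
    refine ⟨hHrow, ?_⟩
    intro b hb
    have h3 := inv_of_mem hsst i b hi hb
    have hW := hHrow b (by omega)
    have hE := hHrow (b + 1) (by omega)
    have hS := hrow b hb
    unfold Ht at hW hE
    unfold Vt at hS ⊢
    split_ifs at hW hE hS ⊢ <;> omega
  have main : ∀ d, d ≤ n → ∀ b, b < n → VVf sst (n - d) b = Vt n k (n - d) b := by
    intro d
    induction d with
    | zero =>
      intro _ b hb
      simp only [Nat.sub_zero]
      rw [bc_VB hsst.1 b hb, eta_one]
      unfold Vt; split_ifs <;> omega
    | succ d ih =>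
      intro hd b hb
      have hi : n - (d + 1) < n := by omega
      refine (rowstep (n - (d + 1)) hi ?_).2 b hb
      intro b' hb'
      have := ih (by omega) b' hb'
      rwa [show n - d = n - (d + 1) + 1 by omega] at this
  constructor
  · intro a ha b hb
    have := main (n - a) (by omega) b hb
    rwa [show n - (n - a) = a by omega] at this
  · intro a ha b hb
    refine (rowstep a ha ?_).1 b hb
    intro b' hb'
    have := main (n - (a + 1)) (by omega) b' hb'
    rwa [show n - (n - (a + 1)) = a + 1 by omega] at this

/-- The unique pipe puzzle for `(u₀, 1, 1)`. -/
def tgt (n k : ℕ) : GridState n :=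
  (fun i j => ⟨Ht n k i j, by unfold Ht; split_ifs <;> omega⟩,
   fun i j => ⟨Vt n k i j, by unfold Vt; have := j.isLt; split_ifs <;> omega⟩)

lemma tgt_HHf {n k : ℕ} (a b : ℕ) (ha : a < n) (hb : b < n + 1) :
    HHf (tgt n k) a b = Ht n k a b := HHf_eq _ a b ha hb

lemma tgt_VVf {n k : ℕ} (a b : ℕ) (ha : a < n + 1) (hb : b < n) :
    VVf (tgt n k) a b = Vt n k a b := VVf_eq _ a b ha hb

lemma tgt_mem {n k : ℕ} (hk : k ≤ n) {u₀ : Equiv.Perm ℕ}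
    (hu₀ : ∀ j, u₀ j = if j < k then n - 1 - j else if j < n then j - k else j) :
    tgt n k ∈ PP n k u₀ 1 1 := by
  refine ⟨⟨?_, ?_, ?_, ?_⟩, ?_⟩
  · intro i
    show Ht n k i ((0 : Fin (n + 1)) : ℕ) = 0
    simp only [Fin.val_zero]
    unfold Ht; split_ifs <;> omega
  · intro i
    show Ht n k i ((Fin.last n : Fin (n + 1)) : ℕ) = kappaLab k u₀ i
    rw [Fin.val_last, kappa_eq hk u₀ hu₀ i i.isLt]
  · intro j
    show Vt n k ((0 : Fin (n + 1)) : ℕ) j = thetaLab k 1 j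
    rw [Fin.val_zero, theta_one]
    unfold Vt
    have := j.isLt
    split_ifs <;> omega
  · intro j
    show Vt n k ((Fin.last n : Fin (n + 1)) : ℕ) j = etaLab 1 j
    rw [Fin.val_last, eta_one]
    unfold Vt; split_ifs <;> omega
  · intro i j
    show LAdm k (Vt n k (i.castSucc : ℕ) j) (Ht n k i (j.succ : ℕ))
      (Ht n k i (j.castSucc : ℕ)) (Vt n k (i.succ : ℕ) j)
    rw [Fin.coe_castSucc, Fin.val_succ, Fin.coe_castSucc, Fin.val_succ]
    have hi := i.isLt
    have hj := j.isLt
    unfold LAdm Vt Ht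
    split_ifs <;> omega

lemma v_eq_one {n k : ℕ} (hk : k ≤ n) {v : Equiv.Perm ℕ} (hv : InSn n v)
    (hvdes : ∀ i, i + 1 < k → v i ≤ v (i + 1))
    (htheta : ∀ b, b < n → thetaLab k v b = if k ≤ b then b + 1 else 0) : v = 1 := by
  have hfix : ∀ j, k ≤ j → v j = j := by
    intro j hj
    rcases le_or_gt n j with h | h
    · exact hv j h
    · have ht := htheta j h
      rw [if_pos hj] at ht
      unfold thetaLab at ht
      by_cases h2 : k ≤ v⁻¹ j
      · rw [if_pos h2] at ht
        have hvj : v⁻¹ j = j := by omega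
        conv_lhs => rw [← hvj]
        exact Equiv.apply_symm_apply v j
      · rw [if_neg h2] at ht
        omega
  have hsmall : ∀ a, a < k → v a < k := by
    intro a ha
    by_contra h
    push_neg at h
    have h1 : v a = v (v a) := (hfix (v a) h).symm
    have h2 : a = v a := v.injective h1
    omega
  have hge : ∀ a, a < k → a ≤ v a := by
    intro a
    induction a with
    | zero => intro _; exact Nat.zero_le _
    | succ a ih =>
      intro ha
      have h1 := ih (by omega)
      have h2 := hvdes a ha
      have h3 : v a ≠ v (a + 1) := fun h => by
        have := v.injective h; omega
      omega
  have hle : ∀ d a, a + d + 1 = k → v a ≤ a := by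
    intro d
    induction d with
    | zero =>
      intro a ha
      have := hsmall a (by omega)
      omega
    | succ d ih =>
      intro a ha
      have h1 := ih (a + 1) (by omega)
      have h2 := hvdes a (by omega)
      have h3 : v a ≠ v (a + 1) := fun h => by
        have := v.injective h; omega
      omega
  refine Equiv.ext fun x => ?_
  show v x = x
  rcases le_or_gt k x with h | h
  · exact hfix x h
  · have h1 := hge x h
    have h2 := hle (k - x - 1) x (by omega)
    omega

lemma mem_eq_tgt {n k : ℕ} (hk : k ≤ n) {u₀ v : Equiv.Perm ℕ}
    (hu₀ : ∀ j, u₀ j = if j < k then n - 1 - j else if j < n then j - k else j)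
    {π : GridState n} (hπ : π ∈ PP n k u₀ v 1) : π = tgt n k := by
  obtain ⟨hV, hH⟩ := forced hk hu₀ hπ
  have e1 : π.1 = (tgt n k).1 := by
    funext i j
    apply Fin.ext
    calc (π.1 i j : ℕ) = HHf π (i : ℕ) (j : ℕ) :=
          (HHf_eq π (i : ℕ) (j : ℕ) i.isLt j.isLt).symm
      _ = Ht n k (i : ℕ) (j : ℕ) := hH (i : ℕ) i.isLt (j : ℕ) (by omega)
      _ = ((tgt n k).1 i j : ℕ) := rfl
  have e2 : π.2 = (tgt n k).2 := by
    funext i j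
    apply Fin.ext
    calc (π.2 i j : ℕ) = VVf π (i : ℕ) (j : ℕ) :=
          (VVf_eq π (i : ℕ) (j : ℕ) i.isLt j.isLt).symm
      _ = Vt n k (i : ℕ) (j : ℕ) := hV (i : ℕ) (by omega) (j : ℕ) j.isLt
      _ = ((tgt n k).2 i j : ℕ) := rfl
  exact Prod.ext e1 e2

lemma prod_range_ite {K : Type*} [CommMonoid K] (M N : ℕ) (hMN : M ≤ N) (c : ℕ → K) :
    (∏ a ∈ Finset.range N, if a < M then c a else 1) = ∏ a ∈ Finset.range M, c a := by
  rw [← Finset.prod_filter]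
  apply Finset.prod_congr _ (fun _ _ => rfl)
  ext a
  simp only [Finset.mem_filter, Finset.mem_range]
  omega

lemma tgt_wt {K : Type*} [Field K] (β : K) {n k : ℕ} (hk : k ≤ n) (t y : ℕ → K) :
    stateWt β k t y (tgt n k) =
      ∏ i ∈ Finset.range k, ∏ j ∈ Finset.range (n - 1 - i), ominus β (t i) (y j) := by
  unfold stateWt
  have hfac : ∀ i j : Fin n,
      Lwt β k (ominus β (t (j : ℕ)) (y (i : ℕ))) (labN (tgt n k) i j) (labE (tgt n k) i j)
        (labW (tgt n k) i j) (labS (tgt n k) i j) =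
      if (j : ℕ) < k ∧ (i : ℕ) + (j : ℕ) + 1 < n
      then ominus β (t (j : ℕ)) (y (i : ℕ)) else 1 := by
    intro i j
    have hi := i.isLt
    have hj := j.isLt
    have eN : labN (tgt n k) i j = Vt n k (i : ℕ) (j : ℕ) := rfl
    have eE : labE (tgt n k) i j = Ht n k (i : ℕ) ((j : ℕ) + 1) := rfl
    have eW : labW (tgt n k) i j = Ht n k (i : ℕ) (j : ℕ) := rfl
    have eS : labS (tgt n k) i j = Vt n k ((i : ℕ) + 1) (j : ℕ) := rfl
    rw [eN, eE, eW, eS]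
    by_cases h1 : n ≤ (i : ℕ) + k
    · rcases lt_trichotomy ((j : ℕ) + 1) (n - (i : ℕ)) with h2 | h2 | h2
      · rw [show Vt n k (i : ℕ) (j : ℕ) = 0 by unfold Vt; split_ifs <;> omega,
          show Ht n k (i : ℕ) ((j : ℕ) + 1) = 0 by unfold Ht; split_ifs <;> omega,
          show Ht n k (i : ℕ) (j : ℕ) = 0 by unfold Ht; split_ifs <;> omega,
          show Vt n k ((i : ℕ) + 1) (j : ℕ) = 0 by unfold Vt; split_ifs <;> omega]
        rw [if_pos (by omega)]
        unfold Lwt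
        rw [if_pos (by omega)]
      · rw [show Vt n k (i : ℕ) (j : ℕ) = 0 by unfold Vt; split_ifs <;> omega,
          show Ht n k (i : ℕ) ((j : ℕ) + 1) = n - (i : ℕ) by unfold Ht; split_ifs <;> omega,
          show Ht n k (i : ℕ) (j : ℕ) = 0 by unfold Ht; split_ifs <;> omega,
          show Vt n k ((i : ℕ) + 1) (j : ℕ) = n - (i : ℕ) by unfold Vt; split_ifs <;> omega]
        rw [if_neg (by omega)]
        unfold Lwt
        rw [if_neg (by omega), if_neg (by omega), if_neg (by omega), if_neg (by omega),
          if_neg (by omega), if_neg (by omega), if_pos (by omega)]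
      · rw [show Vt n k (i : ℕ) (j : ℕ) = (j : ℕ) + 1 by unfold Vt; split_ifs <;> omega,
          show Ht n k (i : ℕ) ((j : ℕ) + 1) = n - (i : ℕ) by unfold Ht; split_ifs <;> omega,
          show Ht n k (i : ℕ) (j : ℕ) = n - (i : ℕ) by unfold Ht; split_ifs <;> omega,
          show Vt n k ((i : ℕ) + 1) (j : ℕ) = (j : ℕ) + 1 by unfold Vt; split_ifs <;> omega]
        rw [if_neg (by omega)]
        unfold Lwt
        rw [if_neg (by omega), if_neg (by omega), if_neg (by omega), if_pos (by omega)]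
    · by_cases h2 : (j : ℕ) < k
      · rw [show Vt n k (i : ℕ) (j : ℕ) = 0 by unfold Vt; split_ifs <;> omega,
          show Ht n k (i : ℕ) ((j : ℕ) + 1) = 0 by unfold Ht; split_ifs <;> omega,
          show Ht n k (i : ℕ) (j : ℕ) = 0 by unfold Ht; split_ifs <;> omega,
          show Vt n k ((i : ℕ) + 1) (j : ℕ) = 0 by unfold Vt; split_ifs <;> omega]
        rw [if_pos (by omega)]
        unfold Lwt
        rw [if_pos (by omega)]
      · rw [show Vt n k (i : ℕ) (j : ℕ) = (j : ℕ) + 1 by unfold Vt; split_ifs <;> omega,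
          show Ht n k (i : ℕ) ((j : ℕ) + 1) = 0 by unfold Ht; split_ifs <;> omega,
          show Ht n k (i : ℕ) (j : ℕ) = 0 by unfold Ht; split_ifs <;> omega,
          show Vt n k ((i : ℕ) + 1) (j : ℕ) = (j : ℕ) + 1 by unfold Vt; split_ifs <;> omega]
        rw [if_neg (by omega)]
        unfold Lwt
        rw [if_neg (by omega), if_pos (by omega)]
  calc (∏ i : Fin n, ∏ j : Fin n,
        Lwt β k (ominus β (t (j : ℕ)) (y (i : ℕ))) (labN (tgt n k) i j) (labE (tgt n k) i j)
          (labW (tgt n k) i j) (labS (tgt n k) i j))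
      = ∏ i : Fin n, ∏ j : Fin n,
          (if (j : ℕ) < k ∧ (i : ℕ) + (j : ℕ) + 1 < n
            then ominus β (t (j : ℕ)) (y (i : ℕ)) else 1) := by
        exact Finset.prod_congr rfl fun i _ => Finset.prod_congr rfl fun j _ => hfac i j
    _ = ∏ a ∈ Finset.range n, ∏ b ∈ Finset.range n,
          (if b < k ∧ a + b + 1 < n then ominus β (t b) (y a) else 1) := by
        rw [← Fin.prod_univ_eq_prod_range (fun a => ∏ b ∈ Finset.range n,
          (if b < k ∧ a + b + 1 < n then ominus β (t b) (y a) else 1)) n]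
        exact Finset.prod_congr rfl fun i _ =>
          Fin.prod_univ_eq_prod_range
            (fun b => if b < k ∧ (i : ℕ) + b + 1 < n then ominus β (t b) (y (i : ℕ)) else 1) n
    _ = ∏ b ∈ Finset.range n, ∏ a ∈ Finset.range n,
          (if b < k ∧ a + b + 1 < n then ominus β (t b) (y a) else 1) := Finset.prod_comm
    _ = ∏ b ∈ Finset.range n,
          (if b < k then ∏ a ∈ Finset.range (n - 1 - b), ominus β (t b) (y a) else 1) := by
        apply Finset.prod_congr rfl
        intro b hb
        rw [Finset.mem_range] at hb
        by_cases hbk : b < k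
        · rw [if_pos hbk, ← prod_range_ite (n - 1 - b) n (by omega)]
          apply Finset.prod_congr rfl
          intro a _
          exact if_congr (by omega) rfl rfl
        · rw [if_neg hbk]
          apply Finset.prod_eq_one
          intro a _
          exact if_neg (fun h => hbk h.1)
    _ = ∏ b ∈ Finset.range k, ∏ a ∈ Finset.range (n - 1 - b), ominus β (t b) (y a) :=
        prod_range_ite k n hk _

/-- Theorem `thm:initial` of the paper.  Let `u₀ ∈ S_n` be
given by `u₀(i) = n+1-i` for `i ≤ k` and `u₀(i) = i-k` for `k < i ≤ n` (1-based;
below in 0-based form), and let `v ∈ S_n` with `mindes(v) ≥ k`.  If `v ≠ id`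
then `PP(u₀, v, id)` is empty; `PP(u₀, id, id)` contains exactly one pipe
puzzle, whose weight is `∏_{i=1}^{k} ∏_{j=1}^{n-i} (t_i ⊖ y_j)`; and consequently
`Σ_{π ∈ PP(u₀,v,id)} wt(π)` equals this product if `v = id` and `0` otherwise. -/
theorem pipe_puzzle_initial_condition
    {K : Type*} [Field K] (β : K)
    (n k : ℕ) (hk : k ≤ n)
    (u₀ : Equiv.Perm ℕ)
    (hu₀ : ∀ j, u₀ j = if j < k then n - 1 - j else if j < n then j - k else j)
    (v : Equiv.Perm ℕ) (hv : InSn n v)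
    (hvdes : ∀ i, i + 1 < k → v i ≤ v (i + 1))
    (t y : ℕ → K) :
    (v ≠ 1 → PP n k u₀ v 1 = (∅ : Set (GridState n))) ∧
    (∃! π : GridState n, π ∈ PP n k u₀ 1 1) ∧
    (∀ π ∈ PP n k u₀ 1 1,
      stateWt β k t y π =
        ∏ i ∈ Finset.range k, ∏ j ∈ Finset.range (n - 1 - i), ominus β (t i) (y j)) ∧
    ((v = 1 → (∑ᶠ π ∈ PP n k u₀ v 1, stateWt β k t y π) =
        ∏ i ∈ Finset.range k, ∏ j ∈ Finset.range (n - 1 - i), ominus β (t i) (y j)) ∧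
     (v ≠ 1 → (∑ᶠ π ∈ PP n k u₀ v 1, stateWt β k t y π) = 0)) := by
  have hempty : v ≠ 1 → PP n k u₀ v 1 = (∅ : Set (GridState n)) := by
    intro hv1
    rw [Set.eq_empty_iff_forall_notMem]
    intro π hπ
    apply hv1
    apply v_eq_one hk hv hvdes
    intro b hb
    have h1 := (forced hk hu₀ hπ).1 0 (by omega) b hb
    rw [bc_VT hπ.1 b hb] at h1
    rw [h1]
    unfold Vt
    split_ifs <;> omega
  have hwt : ∀ π ∈ PP n k u₀ 1 1,
      stateWt β k t y π =
        ∏ i ∈ Finset.range k, ∏ j ∈ Finset.range (n - 1 - i), ominus β (t i) (y j) := by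
    intro π hπ
    rw [mem_eq_tgt hk hu₀ hπ]
    exact tgt_wt β hk t y
  have hsing : PP n k u₀ 1 1 = {tgt n k} :=
    Set.eq_singleton_iff_unique_mem.mpr
      ⟨tgt_mem hk hu₀, fun π hπ => mem_eq_tgt hk hu₀ hπ⟩
  refine ⟨hempty, ⟨tgt n k, tgt_mem hk hu₀, fun π hπ => mem_eq_tgt hk hu₀ hπ⟩, hwt, ?_, ?_⟩
  · intro hv1
    subst hv1
    rw [hsing, finsum_mem_singleton]
    exact tgt_wt β hk t y
  · intro hv1
    rw [hempty hv1, finsum_mem_empty]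
end BPDPuzzle
end
end
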